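/- Collapsing of exponents in the finite setting (Theorem 1.1(i)): For every 0 < p ≤ ∞ there exists a constant C = C(p) such that for every finite outer measure setting (X, μ, ω) and every nonnegative function f on X one has (1/C) ‖f‖_{L^p(X,ω)} ≤ ‖f‖_{L^p(ℓ^p)} ≤ C ‖f‖_{L^p(X,ω)}. The point is that C is independent of X, μ and ω. -/

import Mathlib

open MeasureTheory Set
open scoped ENNReal

noncomputable section

/-- The outer `ℓ^r` size in the finite setting: for `r < ∞`,
`ℓ^r(f)(A) = (μ(A)⁻¹ Σ_{x∈A} ω(x) f(x)^r)^{1/r}`; for `r = ∞` the sup of `f` on `A`. -/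
def ellF {X : Type} (μ : Set X → ℝ≥0∞) (ω : X → ℝ≥0∞)
    (r : ℝ≥0∞) (f : X → ℝ≥0∞) (A : Set X) : ℝ≥0∞ :=
  if r = ∞ then ⨆ x ∈ A, f x
  else ((μ A)⁻¹ * ∑' x : A, ω x.1 * f x.1 ^ r.toReal) ^ r.toReal⁻¹

/-- The outer `L^∞(ℓ^r)` quasi-norm in the finite setting. -/
def supF {X : Type} (μ : Set X → ℝ≥0∞) (ω : X → ℝ≥0∞)
    (r : ℝ≥0∞) (f : X → ℝ≥0∞) : ℝ≥0∞ :=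
  ⨆ A : Set X, ellF μ ω r f A

/-- The super level measure `μ(ℓ^r(f) > λ)` in the finite setting. -/
def slF {X : Type} (μ : Set X → ℝ≥0∞) (ω : X → ℝ≥0∞)
    (r : ℝ≥0∞) (f : X → ℝ≥0∞) (lam : ℝ≥0∞) : ℝ≥0∞ :=
  ⨅ (A : Set X) (_ : supF μ ω r (Aᶜ.indicator f) ≤ lam), μ A

/-- The outer `L^p(ℓ^r)` quasi-norm in the finite setting. -/
def LpF {X : Type} (μ : Set X → ℝ≥0∞) (ω : X → ℝ≥0∞)
    (p r : ℝ≥0∞) (f : X → ℝ≥0∞) : ℝ≥0∞ :=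
  if p = ∞ then supF μ ω r f
  else (∫⁻ l in Ioi (0:ℝ),
      ENNReal.ofReal (p.toReal * l ^ (p.toReal - 1)) *
        slF μ ω r f (ENNReal.ofReal l)) ^ p.toReal⁻¹

/-- The weighted `L^p(X,ω)` norm on a finite set. -/
def wLpF {X : Type} (ω : X → ℝ≥0∞) (p : ℝ≥0∞) (f : X → ℝ≥0∞) : ℝ≥0∞ :=
  if p = ∞ then ⨆ x, f x
  else (∑' x, ω x * f x ^ p.toReal) ^ p.toReal⁻¹

/-- the additive reference measure `ν(A) = Σ_{x∈A} ω x f x ^ T`. -/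
def nuF {X : Type} [Fintype X] (ω f : X → ℝ≥0∞) (T : ℝ) (A : Set X) : ℝ≥0∞ :=
  ∑ x : X, A.indicator (fun y => ω y * f y ^ T) x

section basic
variable {X : Type} [Fintype X] {ω f : X → ℝ≥0∞} {T : ℝ}

lemma nuF_mono {A B : Set X} (h : A ⊆ B) : nuF ω f T A ≤ nuF ω f T B :=
  Finset.sum_le_sum fun x _ =>
    Set.indicator_le_indicator_of_subset h (fun a => zero_le) x

lemma nuF_empty : nuF ω f T (∅ : Set X) = 0 := by simp [nuF]

lemma nuF_union {A B : Set X} (h : Disjoint A B) :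
    nuF ω f T (A ∪ B) = nuF ω f T A + nuF ω f T B := by
  unfold nuF
  rw [← Finset.sum_add_distrib]
  exact Finset.sum_congr rfl fun x _ => by
    rw [Set.indicator_union_of_disjoint h]

lemma nuF_lt_top (hω : ∀ x, ω x < ∞) (hf : ∀ x, f x ≠ ∞) (hT : 0 < T) (A : Set X) :
    nuF ω f T A < ∞ := by
  refine ENNReal.sum_lt_top.mpr fun x _ => ?_
  refine lt_of_le_of_lt (Set.indicator_le_self _ _ x) ?_
  exact ENNReal.mul_lt_top (hω x) (ENNReal.rpow_lt_top_of_nonneg hT.le (hf x))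

lemma tsum_ell (hT : 0 < T) (A B : Set X) :
    ∑' x : B, ω x.1 * ((Aᶜ).indicator f) x.1 ^ T = nuF ω f T (B ∩ Aᶜ) := by
  rw [show (∑' x : B, ω x.1 * ((Aᶜ).indicator f) x.1 ^ T)
      = ∑' x : X, B.indicator (fun y => ω y * ((Aᶜ).indicator f) y ^ T) x from
      tsum_subtype B (fun y => ω y * ((Aᶜ).indicator f) y ^ T), tsum_fintype, nuF]
  refine Finset.sum_congr rfl fun x _ => ?_
  by_cases hB : x ∈ B
  · by_cases hA : x ∈ Aᶜ
    · simp [Set.indicator_of_mem, hB, hA, Set.mem_inter_iff]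
    · simp [Set.indicator_of_mem hB, Set.indicator_of_notMem hA,
        Set.indicator_of_notMem (fun h : x ∈ B ∩ Aᶜ => hA h.2),
        ENNReal.zero_rpow_of_pos hT]
  · simp [Set.indicator_of_notMem hB,
      Set.indicator_of_notMem (fun h : x ∈ B ∩ Aᶜ => hB h.1)]

variable {μ : Set X → ℝ≥0∞}

lemma mu_fin (h0 : μ ∅ = 0) (hsub : ∀ A B : Set X, μ (A ∪ B) ≤ μ A + μ B)
    (hpt : ∀ x : X, 0 < μ {x} ∧ μ {x} < ∞) : ∀ A : Set X, μ A < ∞ := by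
  have H : ∀ n : ℕ, ∀ A : Set X, A.ncard ≤ n → μ A < ∞ := by
    intro n
    induction n with
    | zero =>
      intro A hA
      have : A = ∅ := (Set.ncard_eq_zero A.toFinite).mp (Nat.le_zero.mp hA)
      simp [this, h0]
    | succ n ih =>
      intro A hA
      rcases A.eq_empty_or_nonempty with rfl | ⟨x, hx⟩
      · simp [h0]
      · have h1 : A = {x} ∪ (A \ {x}) := by
          rw [Set.union_diff_cancel (by simpa using hx)]
        have h2 : (A \ {x}).ncard ≤ n := by
          have := Set.ncard_diff_singleton_lt_of_mem hx A.toFinite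
          omega
        calc μ A = μ ({x} ∪ (A \ {x})) := by rw [← h1]
          _ ≤ μ {x} + μ (A \ {x}) := hsub _ _
          _ < ∞ := ENNReal.add_lt_top.mpr ⟨(hpt x).2, ih _ h2⟩
  exact fun A => H A.ncard A le_rfl

lemma mu_pos (hmono : ∀ A B : Set X, A ⊆ B → μ A ≤ μ B)
    (hpt : ∀ x : X, 0 < μ {x} ∧ μ {x} < ∞) {A : Set X} (hA : A.Nonempty) : 0 < μ A := by
  obtain ⟨x, hx⟩ := hA
  exact lt_of_lt_of_le (hpt x).1 (hmono _ _ (by simpa using hx))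

lemma mu_eq_zero (hmono : ∀ A B : Set X, A ⊆ B → μ A ≤ μ B)
    (hpt : ∀ x : X, 0 < μ {x} ∧ μ {x} < ∞) {A : Set X} (hA : μ A = 0) : A = ∅ := by
  by_contra h
  exact absurd hA (mu_pos hmono hpt (Set.nonempty_iff_ne_empty.mpr h)).ne'

end basic

lemma level_eq {T : ℝ} (K n : ℕ) :
    (ENNReal.ofReal ((2:ℝ) ^ ((K:ℝ) - n)) : ℝ≥0∞) ^ T =
      ENNReal.ofReal ((2:ℝ) ^ ((K:ℝ) * T)) * (ENNReal.ofReal ((2:ℝ) ^ (-T))) ^ n := by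
  have hreal : ((2:ℝ) ^ ((K:ℝ) - n)) ^ T = (2:ℝ) ^ ((K:ℝ) * T) * ((2:ℝ) ^ (-T)) ^ n := by
    rw [← Real.rpow_natCast ((2:ℝ) ^ (-T)) n, ← Real.rpow_mul (by norm_num : (0:ℝ) ≤ 2),
      ← Real.rpow_mul (by norm_num : (0:ℝ) ≤ 2), ← Real.rpow_add two_pos]
    congr 1
    ring
  rw [ENNReal.ofReal_rpow_of_pos (Real.rpow_pos_of_pos two_pos _), hreal,
    ENNReal.ofReal_mul (Real.rpow_nonneg (by norm_num) _),
    ENNReal.ofReal_pow (Real.rpow_nonneg (by norm_num) _)]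

lemma rzero_lt (K : ℕ) {l : ℝ} (hl : 0 < l) : ∃ n : ℕ, (2:ℝ) ^ ((K:ℝ) - (n+1:ℕ)) < l := by
  have hr0 : (0:ℝ) < (2:ℝ) ^ ((K:ℝ) - (0:ℕ)) := Real.rpow_pos_of_pos two_pos _
  obtain ⟨n, hn⟩ := exists_pow_lt_of_lt_one (div_pos hl hr0) (by norm_num : (1:ℝ)/2 < 1)
  refine ⟨n, ?_⟩
  have key : ∀ m : ℕ, (2:ℝ) ^ ((K:ℝ) - (m:ℕ)) = (2:ℝ) ^ ((K:ℝ) - (0:ℕ)) * ((1:ℝ)/2) ^ m := by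
    intro m
    rw [one_div, inv_pow, ← Real.rpow_natCast (2:ℝ) m, ← Real.rpow_neg (by norm_num : (0:ℝ) ≤ 2),
      ← Real.rpow_add two_pos]
    congr 1
    push_cast
    ring
  have h2 : (2:ℝ) ^ ((K:ℝ) - (n:ℕ)) < l := by
    rw [key n]
    calc (2:ℝ) ^ ((K:ℝ) - (0:ℕ)) * ((1:ℝ)/2) ^ n
        < (2:ℝ) ^ ((K:ℝ) - (0:ℕ)) * (l / (2:ℝ) ^ ((K:ℝ) - (0:ℕ))) := by
          exact mul_lt_mul_of_pos_left hn hr0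
      _ = l := by field_simp
  have h3 : (2:ℝ) ^ ((K:ℝ) - ((n+1:ℕ):ℝ)) ≤ (2:ℝ) ^ ((K:ℝ) - (n:ℕ)) := by
    apply Real.rpow_le_rpow_left_iff one_lt_two |>.mpr
    push_cast; linarith
  exact lt_of_le_of_lt h3 h2

lemma exists_K {X : Type} [Fintype X] (μ : Set X → ℝ≥0∞) (ω f : X → ℝ≥0∞) {T : ℝ} (hT : 0 < T)
    (hmono : ∀ A B : Set X, A ⊆ B → μ A ≤ μ B)
    (hpt : ∀ x : X, 0 < μ {x} ∧ μ {x} < ∞)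
    (hω : ∀ x : X, 0 < ω x ∧ ω x < ∞) (hf : ∀ x, f x ≠ ∞) :
    ∃ K : ℕ, ∀ C : Set X,
      nuF ω f T C ≤ ENNReal.ofReal ((2:ℝ) ^ ((K:ℝ) * T)) * μ C := by
  rcases isEmpty_or_nonempty X with hX | hX
  · refine ⟨0, fun C => ?_⟩
    have : C = ∅ := Set.eq_empty_of_isEmpty C
    simp [this, nuF_empty]
  · obtain ⟨x₀, hx₀⟩ := Finite.exists_min (fun x : X => μ {x})
    have hν : nuF ω f T univ < ∞ := nuF_lt_top (fun x => (hω x).2) hf hT _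
    have hm0 : μ {x₀} ≠ 0 := (hpt x₀).1.ne'
    obtain ⟨n₀, hn₀⟩ := ENNReal.exists_nat_gt (show nuF ω f T univ / μ {x₀} ≠ ∞ from
      (ENNReal.div_lt_top hν.ne hm0).ne)
    obtain ⟨K, hK⟩ := pow_unbounded_of_one_lt (n₀:ℝ)
      (show (1:ℝ) < 2 ^ T from
        (Real.one_lt_rpow_iff_of_pos two_pos).mpr (Or.inl ⟨one_lt_two, hT⟩))
    refine ⟨K, fun C => ?_⟩
    rcases C.eq_empty_or_nonempty with rfl | ⟨y, hy⟩
    · simp [nuF_empty]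
    · have h1 : nuF ω f T C ≤ nuF ω f T univ := nuF_mono (subset_univ _)
      have h2 : nuF ω f T univ ≤ n₀ * μ {x₀} := by
        rw [ENNReal.div_lt_iff (Or.inl hm0) (Or.inl (hpt x₀).2.ne)] at hn₀
        exact hn₀.le
      have h3 : μ {x₀} ≤ μ C := le_trans (hx₀ y) (hmono _ _ (by simpa using hy))
      have h4 : (n₀ : ℝ≥0∞) ≤ ENNReal.ofReal ((2:ℝ) ^ ((K:ℝ) * T)) := by
        rw [← ENNReal.ofReal_natCast n₀]
        apply ENNReal.ofReal_le_ofReal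
        have : (2:ℝ) ^ ((K:ℝ) * T) = ((2:ℝ) ^ T) ^ K := by
          rw [mul_comm, Real.rpow_mul (by norm_num : (0:ℝ) ≤ 2), Real.rpow_natCast]
        rw [this]; exact hK.le
      calc nuF ω f T C ≤ n₀ * μ {x₀} := h1.trans h2
        _ ≤ ENNReal.ofReal ((2:ℝ) ^ ((K:ℝ) * T)) * μ C := mul_le_mul' h4 h3


lemma inv_mul_self_le_one (a : ℝ≥0∞) : a⁻¹ * a ≤ 1 := by
  rcases eq_or_ne a 0 with rfl | h0
  · simp
  rcases eq_or_ne a ∞ with rfl | htop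
  · simp
  rw [ENNReal.inv_mul_cancel h0 htop]

section adm
variable {X : Type} [Fintype X] {μ : Set X → ℝ≥0∞} {ω f : X → ℝ≥0∞} {p : ℝ≥0∞}

lemma adm_of (hp0 : p ≠ 0) (hptop : p ≠ ∞)
    (hmono : ∀ A B : Set X, A ⊆ B → μ A ≤ μ B)
    {A : Set X} {lam : ℝ≥0∞}
    (h : ∀ C : Set X, C ⊆ Aᶜ → nuF ω f p.toReal C ≤ lam ^ p.toReal * μ C) :
    supF μ ω p (Aᶜ.indicator f) ≤ lam := by
  have hT : 0 < p.toReal := ENNReal.toReal_pos hp0 hptop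
  refine iSup_le fun B => ?_
  rw [ellF, if_neg hptop, tsum_ell hT]
  have key : (μ B)⁻¹ * nuF ω f p.toReal (B ∩ Aᶜ) ≤ lam ^ p.toReal := by
    calc (μ B)⁻¹ * nuF ω f p.toReal (B ∩ Aᶜ)
        ≤ (μ B)⁻¹ * (lam ^ p.toReal * μ (B ∩ Aᶜ)) :=
          mul_le_mul_right (h _ Set.inter_subset_right) _
      _ ≤ (μ B)⁻¹ * (lam ^ p.toReal * μ B) :=
          mul_le_mul_right (mul_le_mul_right (hmono _ _ Set.inter_subset_left) _) _
      _ = lam ^ p.toReal * ((μ B)⁻¹ * μ B) := by ring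
      _ ≤ lam ^ p.toReal * 1 := mul_le_mul_right (inv_mul_self_le_one _) _
      _ = lam ^ p.toReal := mul_one _
  have h2 := ENNReal.rpow_le_rpow key (inv_nonneg.mpr hT.le)
  rwa [← ENNReal.rpow_mul, mul_inv_cancel₀ hT.ne', ENNReal.rpow_one] at h2

lemma adm_to (hp0 : p ≠ 0) (hptop : p ≠ ∞)
    (hmono : ∀ A B : Set X, A ⊆ B → μ A ≤ μ B)
    (hpt : ∀ x : X, 0 < μ {x} ∧ μ {x} < ∞)
    (hfin : ∀ B : Set X, μ B < ∞)
    {A : Set X} {lam : ℝ≥0∞}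
    (h : supF μ ω p (Aᶜ.indicator f) ≤ lam) (B : Set X) :
    nuF ω f p.toReal (B ∩ Aᶜ) ≤ lam ^ p.toReal * μ B := by
  have hT : 0 < p.toReal := ENNReal.toReal_pos hp0 hptop
  have h1 : ellF μ ω p (Aᶜ.indicator f) B ≤ lam := le_trans (le_iSup _ B) h
  rw [ellF, if_neg hptop, tsum_ell hT] at h1
  have h2 : (μ B)⁻¹ * nuF ω f p.toReal (B ∩ Aᶜ) ≤ lam ^ p.toReal := by
    have h3 := ENNReal.rpow_le_rpow h1 hT.le
    rwa [← ENNReal.rpow_mul, inv_mul_cancel₀ hT.ne', ENNReal.rpow_one] at h3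
  rcases eq_or_ne (μ B) 0 with hB | hB
  · rw [mu_eq_zero hmono hpt hB]
    simp [nuF_empty]
  · calc nuF ω f p.toReal (B ∩ Aᶜ)
        = μ B * ((μ B)⁻¹ * nuF ω f p.toReal (B ∩ Aᶜ)) := by
          rw [← mul_assoc, ENNReal.mul_inv_cancel hB (hfin B).ne, one_mul]
      _ ≤ μ B * lam ^ p.toReal := mul_le_mul_right h2 _
      _ = lam ^ p.toReal * μ B := mul_comm _ _

lemma slF_le {A : Set X} {lam : ℝ≥0∞} (h : supF μ ω p (Aᶜ.indicator f) ≤ lam) :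
    slF μ ω p f lam ≤ μ A := iInf₂_le A h

lemma slF_anti {lam lam' : ℝ≥0∞} (h : lam ≤ lam') :
    slF μ ω p f lam' ≤ slF μ ω p f lam :=
  le_iInf₂ fun A hA => iInf₂_le A (hA.trans h)

lemma supF_zero_fn (hp0 : p ≠ 0) (hptop : p ≠ ∞) :
    supF μ ω p ((univ : Set X)ᶜ.indicator f) = 0 := by
  have hT : 0 < p.toReal := ENNReal.toReal_pos hp0 hptop
  rw [compl_univ, Set.indicator_empty]
  refine le_antisymm (iSup_le fun B => ?_) (zero_le)
  rw [ellF, if_neg hptop]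
  simp [ENNReal.zero_rpow_of_pos hT, ENNReal.zero_rpow_of_pos (inv_pos.mpr hT)]

lemma exists_opt (hp0 : p ≠ 0) (hptop : p ≠ ∞) (lam : ℝ≥0∞) :
    ∃ A : Set X, supF μ ω p (Aᶜ.indicator f) ≤ lam ∧ μ A = slF μ ω p f lam := by
  haveI : Finite (Set X) := by infer_instance
  let S := {A : Set X // supF μ ω p (Aᶜ.indicator f) ≤ lam}
  haveI : Nonempty S := ⟨⟨univ, by rw [supF_zero_fn hp0 hptop]; exact zero_le⟩⟩
  obtain ⟨A₀, hA₀⟩ := Finite.exists_min (fun A : S => μ A.1)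
  exact ⟨A₀.1, A₀.2, le_antisymm (le_iInf₂ fun A hA => hA₀ ⟨A, hA⟩) (iInf₂_le A₀.1 A₀.2)⟩

lemma greedy {T : ℝ} (h0 : μ ∅ = 0) (hsub : ∀ A B : Set X, μ (A ∪ B) ≤ μ A + μ B)
    (c : ℝ≥0∞) (S : Set X) :
    ∃ G : Set X, G ⊆ S ∧ (∀ C : Set X, C ⊆ S \ G → nuF ω f T C ≤ c * μ C) ∧
      c * μ G ≤ nuF ω f T G := by
  have H : ∀ n : ℕ, ∀ S : Set X, S.ncard ≤ n →
      ∃ G : Set X, G ⊆ S ∧ (∀ C : Set X, C ⊆ S \ G → nuF ω f T C ≤ c * μ C) ∧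
        c * μ G ≤ nuF ω f T G := by
    intro n
    induction n with
    | zero =>
      intro S hS
      have hSe : S = ∅ := (Set.ncard_eq_zero S.toFinite).mp (Nat.le_zero.mp hS)
      subst hSe
      refine ⟨∅, subset_rfl, fun C hC => ?_, by simp [h0, nuF_empty]⟩
      have : C = ∅ := Set.subset_empty_iff.mp (hC.trans (by simp))
      simp [this, h0, nuF_empty]
    | succ n ih =>
      intro S hS
      by_cases hgood : ∀ C : Set X, C ⊆ S → nuF ω f T C ≤ c * μ C
      · exact ⟨∅, empty_subset _, fun C hC => hgood C (hC.trans diff_subset),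
          by simp [h0, nuF_empty]⟩
      · push_neg at hgood
        obtain ⟨C₀, hC₀S, hC₀⟩ := hgood
        have hC₀ne : C₀.Nonempty := by
          rcases C₀.eq_empty_or_nonempty with rfl | h
          · simp [h0, nuF_empty] at hC₀
          · exact h
        have hcard : (S \ C₀).ncard ≤ n := by
          have hss : S \ C₀ ⊂ S := by
            obtain ⟨x, hx⟩ := hC₀ne
            rw [Set.ssubset_def]
            exact ⟨diff_subset, fun hsub' => (hsub' (hC₀S hx)).2 hx⟩
          have := Set.ncard_lt_ncard hss S.toFinite
          omega
        obtain ⟨G', hG'sub, hG'prop, hG'low⟩ := ih (S \ C₀) hcard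
        refine ⟨G' ∪ C₀, union_subset (hG'sub.trans diff_subset) hC₀S, fun C hC => ?_, ?_⟩
        · apply hG'prop
          have heq : S \ (G' ∪ C₀) = (S \ C₀) \ G' := by
            rw [Set.diff_diff, Set.union_comm]
          rwa [heq] at hC
        · have hdisj : Disjoint G' C₀ :=
            Set.disjoint_of_subset_left hG'sub disjoint_sdiff_left
          calc c * μ (G' ∪ C₀) ≤ c * (μ G' + μ C₀) := mul_le_mul_right (hsub _ _) _
            _ = c * μ G' + c * μ C₀ := mul_add _ _ _
            _ ≤ nuF ω f T G' + nuF ω f T C₀ := add_le_add hG'low hC₀.le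
            _ = nuF ω f T (G' ∪ C₀) := (nuF_union hdisj).symm
  exact H S.ncard S le_rfl

end adm

lemma lint_Ioc {T : ℝ} (hT : 0 < T) {a b : ℝ} (ha : 0 < a) (hab : a ≤ b) :
    ∫⁻ l in Ioc a b, ENNReal.ofReal (T * l ^ (T - 1)) = ENNReal.ofReal (b ^ T - a ^ T) := by
  rw [← ofReal_integral_eq_lintegral_ofReal]
  · congr 1
    rw [← intervalIntegral.integral_of_le hab, intervalIntegral.integral_const_mul,
      integral_rpow (Or.inl (by linarith)), sub_add_cancel, mul_comm,
      div_mul_cancel₀ _ hT.ne']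
  · have hcont : ContinuousOn (fun l : ℝ => T * l ^ (T - 1)) (Icc a b) :=
      continuousOn_const.mul (continuousOn_id.rpow_const fun x hx =>
        Or.inl (ne_of_gt (lt_of_lt_of_le ha hx.1)))
    exact (hcont.integrableOn_Icc).mono_set Ioc_subset_Icc_self
  · refine (ae_restrict_mem measurableSet_Ioc).mono fun x hx => ?_
    have : (0:ℝ) ≤ x ^ (T - 1) := Real.rpow_nonneg (le_of_lt (lt_of_lt_of_le ha hx.1.le)) _
    positivity



lemma upper {X : Type} [Fintype X] (μ : Set X → ℝ≥0∞) (ω : X → ℝ≥0∞) (p : ℝ≥0∞)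
    (hp0 : p ≠ 0) (hptop : p ≠ ∞)
    (h0 : μ ∅ = 0) (hmono : ∀ A B : Set X, A ⊆ B → μ A ≤ μ B)
    (hsub : ∀ A B : Set X, μ (A ∪ B) ≤ μ A + μ B)
    (hpt : ∀ x : X, 0 < μ {x} ∧ μ {x} < ∞) (hω : ∀ x : X, 0 < ω x ∧ ω x < ∞)
    (f : X → ℝ≥0∞) (hf : ∀ x, f x ≠ ∞) :
    (∫⁻ l in Ioi (0:ℝ), ENNReal.ofReal (p.toReal * l ^ (p.toReal - 1)) *
        slF μ ω p f (ENNReal.ofReal l)) ≤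
      (ENNReal.ofReal ((2:ℝ) ^ (-p.toReal)))⁻¹ *
        (1 - ENNReal.ofReal ((2:ℝ) ^ (-p.toReal)))⁻¹ * nuF ω f p.toReal univ := by
  have hT : 0 < p.toReal := ENNReal.toReal_pos hp0 hptop
  set T := p.toReal with hTdef
  set q : ℝ≥0∞ := ENNReal.ofReal ((2:ℝ) ^ (-T)) with hqdef
  have hq0 : q ≠ 0 := by
    rw [hqdef]
    simp [ENNReal.ofReal_eq_zero, not_le, Real.rpow_pos_of_pos two_pos]
  have hqtop : q ≠ ∞ := ENNReal.ofReal_ne_top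
  obtain ⟨K, hK0⟩ := exists_K μ ω f hT hmono hpt hω hf
  set r : ℕ → ℝ := fun n => (2:ℝ) ^ ((K:ℝ) - n) with hrdef
  have hrpos : ∀ n, 0 < r n := fun n => Real.rpow_pos_of_pos two_pos _
  have hrmono : ∀ n, r (n+1) ≤ r n := by
    intro n
    rw [hrdef]
    apply (Real.rpow_le_rpow_left_iff one_lt_two).mpr
    push_cast; linarith
  set κ : ℝ≥0∞ := ENNReal.ofReal ((2:ℝ) ^ ((K:ℝ) * T)) with hκdef
  have hκ0 : κ ≠ 0 := by
    rw [hκdef]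
    simp [ENNReal.ofReal_eq_zero, not_le, Real.rpow_pos_of_pos two_pos]
  have hκtop : κ ≠ ∞ := ENNReal.ofReal_ne_top
  set v : ℕ → ℝ≥0∞ := fun n => κ * q ^ n with hvdef
  have hv0 : ∀ n, v n ≠ 0 := fun n => mul_ne_zero hκ0 (pow_ne_zero n hq0)
  have hvtop : ∀ n, v n ≠ ∞ := fun n =>
    ENNReal.mul_ne_top hκtop (ENNReal.pow_ne_top hqtop)
  have hlev : ∀ n, (ENNReal.ofReal (r n)) ^ T = v n := fun n => level_eq K n
  have hK : ∀ C : Set X, nuF ω f T C ≤ v 0 * μ C := by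
    intro C
    simpa only [hvdef, pow_zero, mul_one] using hK0 C
  -- greedy recursion
  have grd := greedy (μ := μ) (ω := ω) (f := f) (T := T) h0 hsub
  choose Gf hG1 hG2 hG3 using grd
  set B : ℕ → Set X := fun n => Nat.rec ∅ (fun m Bm => Bm ∪ Gf (v (m+1)) Bmᶜ) n with hBdef
  have hB0 : B 0 = ∅ := rfl
  have hBs : ∀ n, B (n+1) = B n ∪ Gf (v (n+1)) (B n)ᶜ := fun n => rfl
  set G : ℕ → Set X := fun n => Gf (v (n+1)) (B n)ᶜ with hGdef
  have hadm : ∀ n, ∀ C : Set X, C ⊆ (B n)ᶜ → nuF ω f T C ≤ v n * μ C := by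
    intro n
    cases n with
    | zero =>
      intro C _
      exact hK C
    | succ m =>
      intro C hC
      apply hG2 (v (m+1)) (B m)ᶜ
      have he : (B (m+1))ᶜ = (B m)ᶜ \ Gf (v (m+1)) (B m)ᶜ := by
        rw [hBs m, Set.compl_union, Set.diff_eq]
      rwa [he] at hC
  have hsupb : ∀ n (lam : ℝ≥0∞), ENNReal.ofReal (r n) ≤ lam →
      slF μ ω p f lam ≤ μ (B n) := by
    intro n lam hlam
    refine le_trans (slF_anti hlam) (slF_le ?_)
    refine adm_of hp0 hptop hmono fun C hC => ?_
    rw [← hTdef, hlev n]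
    exact hadm n C hC
  have hμB : ∀ n, μ (B n) ≤ ∑ j ∈ Finset.range n, (v (j+1))⁻¹ * nuF ω f T (G j) := by
    intro n
    induction n with
    | zero => simp [hB0, h0]
    | succ m ih =>
      rw [hBs m, Finset.sum_range_succ]
      refine le_trans (hsub _ _) (add_le_add ih ?_)
      have h3 := hG3 (v (m+1)) (B m)ᶜ
      calc μ (Gf (v (m+1)) (B m)ᶜ)
          = (v (m+1))⁻¹ * (v (m+1) * μ (Gf (v (m+1)) (B m)ᶜ)) := by
            rw [← mul_assoc, ENNReal.inv_mul_cancel (hv0 _) (hvtop _), one_mul]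
        _ ≤ (v (m+1))⁻¹ * nuF ω f T (G m) := mul_le_mul_right h3 _
  have hGdisjB : ∀ n, Disjoint (B n) (G n) := fun n =>
    Set.disjoint_of_subset_right (hG1 (v (n+1)) (B n)ᶜ) disjoint_compl_right
  have hνB : ∀ n, ∑ j ∈ Finset.range n, nuF ω f T (G j) = nuF ω f T (B n) := by
    intro n
    induction n with
    | zero => simp [hB0, nuF_empty]
    | succ m ih => rw [Finset.sum_range_succ, ih, hBs m, nuF_union (hGdisjB m)]
  have hνsum : ∑' j, nuF ω f T (G j) ≤ nuF ω f T univ :=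
    Summable.tsum_le_of_sum_range_le ENNReal.summable fun n =>
      le_trans (le_of_eq (hνB n)) (nuF_mono (subset_univ _))
  -- decompose the integral
  set dens : ℝ → ℝ≥0∞ := fun l => ENNReal.ofReal (T * l ^ (T - 1)) with hdens
  set S : ℕ → Set ℝ := fun n => Nat.casesOn n (Ioi (r 0)) (fun m => Ioc (r (m+1)) (r m))
    with hSdef
  have hcover : Ioi (0:ℝ) ⊆ ⋃ n, S n := by
    intro l hl
    have hl' : (0:ℝ) < l := hl
    rcases le_or_gt l (r 0) with hl0 | hl0
    · have hex : ∃ n : ℕ, r (n+1) < l := rzero_lt K hl'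
      haveI : DecidablePred fun n : ℕ => r (n+1) < l := fun _ => Classical.dec _
      refine mem_iUnion.mpr ⟨Nat.find hex + 1, ?_⟩
      refine ⟨Nat.find_spec hex, ?_⟩
      rcases Nat.eq_zero_or_pos (Nat.find hex) with hz | hpos
      · rw [hz]; exact hl0
      · have := Nat.find_min hex (Nat.sub_lt hpos one_pos)
        have h1 : Nat.find hex - 1 + 1 = Nat.find hex := Nat.succ_pred_eq_of_pos hpos
        rw [h1] at this
        exact le_of_not_gt this
    · exact mem_iUnion.mpr ⟨0, hl0⟩
  have hsplit : (∫⁻ l in Ioi (0:ℝ), dens l * slF μ ω p f (ENNReal.ofReal l)) ≤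
      ∑' n, ∫⁻ l in S n, dens l * slF μ ω p f (ENNReal.ofReal l) :=
    le_trans (lintegral_mono_set hcover) (lintegral_iUnion_le _ _)
  have hS0 : (∫⁻ l in S 0, dens l * slF μ ω p f (ENNReal.ofReal l)) = 0 := by
    have hz : ∀ l ∈ Ioi (r 0), dens l * slF μ ω p f (ENNReal.ofReal l) ≤ 0 := by
      intro l hl
      have h1 : slF μ ω p f (ENNReal.ofReal l) ≤ μ (B 0) :=
        hsupb 0 _ (ENNReal.ofReal_le_ofReal (le_of_lt hl))
      rw [hB0, h0, le_zero_iff] at h1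
      rw [h1, mul_zero]
    refine le_antisymm ?_ (zero_le)
    calc (∫⁻ l in S 0, dens l * slF μ ω p f (ENNReal.ofReal l))
        ≤ ∫⁻ _ in Ioi (r 0), (0:ℝ≥0∞) := setLIntegral_mono' measurableSet_Ioi hz
      _ = 0 := by simp
  have hSn : ∀ n, (∫⁻ l in S (n+1), dens l * slF μ ω p f (ENNReal.ofReal l)) ≤
      v n * μ (B (n+1)) := by
    intro n
    have hb : ∀ l ∈ Ioc (r (n+1)) (r n),
        dens l * slF μ ω p f (ENNReal.ofReal l) ≤ dens l * μ (B (n+1)) := fun l hl =>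
      mul_le_mul_right (hsupb (n+1) _ (ENNReal.ofReal_le_ofReal hl.1.le)) _
    calc (∫⁻ l in S (n+1), dens l * slF μ ω p f (ENNReal.ofReal l))
        ≤ ∫⁻ l in Ioc (r (n+1)) (r n), dens l * μ (B (n+1)) :=
          setLIntegral_mono' measurableSet_Ioc hb
      _ = (∫⁻ l in Ioc (r (n+1)) (r n), dens l) * μ (B (n+1)) :=
          lintegral_mul_const' _ _ (mu_fin h0 hsub hpt _).ne
      _ = ENNReal.ofReal (r n ^ T - r (n+1) ^ T) * μ (B (n+1)) := by
          rw [hdens, lint_Ioc hT (hrpos (n+1)) (hrmono n)]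
      _ ≤ v n * μ (B (n+1)) := by
          refine mul_le_mul_left ?_ _
          calc ENNReal.ofReal (r n ^ T - r (n+1) ^ T)
              ≤ ENNReal.ofReal (r n ^ T) :=
                ENNReal.ofReal_le_ofReal (sub_le_self _ (Real.rpow_nonneg (hrpos _).le _))
            _ = (ENNReal.ofReal (r n)) ^ T := (ENNReal.ofReal_rpow_of_pos (hrpos n)).symm
            _ = v n := hlev n
  -- sum the pieces
  have hshift : ∑' n, (∫⁻ l in S n, dens l * slF μ ω p f (ENNReal.ofReal l)) =
      ∑' n, (∫⁻ l in S (n+1), dens l * slF μ ω p f (ENNReal.ofReal l)) := by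
    refine (Function.Injective.tsum_eq (fun a b h => Nat.succ_injective h) ?_).symm
    intro m hm
    rcases m with _ | m'
    · exact absurd hS0 hm
    · exact ⟨m', rfl⟩
  have hsum1 : ∑' n, (∫⁻ l in S (n+1), dens l * slF μ ω p f (ENNReal.ofReal l)) ≤
      ∑' n, v n * μ (B (n+1)) := Summable.tsum_le_tsum hSn ENNReal.summable ENNReal.summable
  have hsum2 : ∑' n, v n * μ (B (n+1)) ≤
      ∑' n, v n * ∑ j ∈ Finset.range (n+1), (v (j+1))⁻¹ * nuF ω f T (G j) :=
    Summable.tsum_le_tsum (fun n => mul_le_mul_right (hμB (n+1)) _) ENNReal.summable ENNReal.summable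
  -- swap the double sum
  have hswap : ∑' n, v n * ∑ j ∈ Finset.range (n+1), (v (j+1))⁻¹ * nuF ω f T (G j) =
      ∑' j, (∑' n, if j ≤ n then v n else 0) * ((v (j+1))⁻¹ * nuF ω f T (G j)) := by
    have e1 : ∀ n : ℕ, v n * ∑ j ∈ Finset.range (n+1), (v (j+1))⁻¹ * nuF ω f T (G j) =
        ∑' j : ℕ, (if j ≤ n then v n * ((v (j+1))⁻¹ * nuF ω f T (G j)) else 0) := by
      intro n
      rw [Finset.mul_sum]
      rw [tsum_eq_sum (s := Finset.range (n+1))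
        (fun j hj => if_neg (fun hc => hj (Finset.mem_range_succ_iff.mpr hc)))]
      exact Finset.sum_congr rfl fun j hj => (if_pos (Finset.mem_range_succ_iff.mp hj)).symm
    calc ∑' n, v n * ∑ j ∈ Finset.range (n+1), (v (j+1))⁻¹ * nuF ω f T (G j)
        = ∑' n, ∑' j, (if j ≤ n then v n * ((v (j+1))⁻¹ * nuF ω f T (G j)) else 0) :=
          tsum_congr e1
      _ = ∑' j, ∑' n, (if j ≤ n then v n * ((v (j+1))⁻¹ * nuF ω f T (G j)) else 0) :=
          ENNReal.tsum_comm
      _ = ∑' j, (∑' n, if j ≤ n then v n else 0) * ((v (j+1))⁻¹ * nuF ω f T (G j)) := by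
          refine tsum_congr fun j => ?_
          rw [← ENNReal.tsum_mul_right]
          exact tsum_congr fun n => by split_ifs <;> simp
  have htail : ∀ j : ℕ, (∑' n, if j ≤ n then v n else 0) = v j * (1 - q)⁻¹ := by
    intro j
    have h1 : ∑' i : ℕ, v (j + i) = ∑' n, if j ≤ n then v n else 0 := by
      have h2 := Function.Injective.tsum_eq (f := fun n => if j ≤ n then v n else 0)
        (g := fun i => j + i) (add_right_injective j)
        (by intro m hm
            by_cases h : j ≤ m
            · exact ⟨m - j, show j + (m - j) = m by omega⟩
            · simp [h] at hm)
      rw [← h2]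
      exact tsum_congr fun i => (if_pos (Nat.le_add_right j i)).symm
    rw [← h1]
    have h2 : ∀ i : ℕ, v (j + i) = v j * q ^ i := by
      intro i
      rw [hvdef]
      simp only [pow_add, mul_assoc]
    rw [tsum_congr h2, ENNReal.tsum_mul_left, ENNReal.tsum_geometric]
  have hcoef : ∀ j : ℕ, v j * (1 - q)⁻¹ * ((v (j+1))⁻¹ * nuF ω f T (G j)) =
      q⁻¹ * (1 - q)⁻¹ * nuF ω f T (G j) := by
    intro j
    have hvv : v j * (v (j+1))⁻¹ = q⁻¹ := by
      rw [hvdef]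
      simp only []
      rw [ENNReal.mul_inv (Or.inl hκ0) (Or.inl hκtop), pow_succ,
        ENNReal.mul_inv (Or.inl (pow_ne_zero _ hq0)) (Or.inl (ENNReal.pow_ne_top hqtop))]
      calc κ * q ^ j * (κ⁻¹ * ((q ^ j)⁻¹ * q⁻¹))
          = κ * κ⁻¹ * (q ^ j * (q ^ j)⁻¹) * q⁻¹ := by ring
        _ = q⁻¹ := by
            rw [ENNReal.mul_inv_cancel hκ0 hκtop,
              ENNReal.mul_inv_cancel (pow_ne_zero _ hq0) (ENNReal.pow_ne_top hqtop),
              one_mul, one_mul]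
    calc v j * (1 - q)⁻¹ * ((v (j+1))⁻¹ * nuF ω f T (G j))
        = v j * (v (j+1))⁻¹ * (1 - q)⁻¹ * nuF ω f T (G j) := by ring
      _ = q⁻¹ * (1 - q)⁻¹ * nuF ω f T (G j) := by rw [hvv]
  calc (∫⁻ l in Ioi (0:ℝ), dens l * slF μ ω p f (ENNReal.ofReal l))
      ≤ ∑' n, (∫⁻ l in S n, dens l * slF μ ω p f (ENNReal.ofReal l)) := hsplit
    _ = ∑' n, (∫⁻ l in S (n+1), dens l * slF μ ω p f (ENNReal.ofReal l)) := hshift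
    _ ≤ ∑' n, v n * μ (B (n+1)) := hsum1
    _ ≤ ∑' n, v n * ∑ j ∈ Finset.range (n+1), (v (j+1))⁻¹ * nuF ω f T (G j) := hsum2
    _ = ∑' j, (∑' n, if j ≤ n then v n else 0) * ((v (j+1))⁻¹ * nuF ω f T (G j)) := hswap
    _ = ∑' j, q⁻¹ * (1 - q)⁻¹ * nuF ω f T (G j) := by
        refine tsum_congr fun j => ?_
        rw [htail j]
        exact hcoef j
    _ = q⁻¹ * (1 - q)⁻¹ * ∑' j, nuF ω f T (G j) := ENNReal.tsum_mul_left
    _ ≤ q⁻¹ * (1 - q)⁻¹ * nuF ω f T univ := mul_le_mul_right hνsum _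


lemma nuF_split {X : Type} [Fintype X] {ω f : X → ℝ≥0∞} {T : ℝ} (A B : Set X) :
    nuF ω f T A = nuF ω f T (A ∩ B) + nuF ω f T (A \ B) := by
  have hd : Disjoint (A ∩ B) (A \ B) :=
    Set.disjoint_left.mpr fun x hx1 hx2 => hx2.2 hx1.2
  rw [← nuF_union hd, Set.inter_union_diff]

lemma lower {X : Type} [Fintype X] (μ : Set X → ℝ≥0∞) (ω : X → ℝ≥0∞) (p : ℝ≥0∞)
    (hp0 : p ≠ 0) (hptop : p ≠ ∞)
    (h0 : μ ∅ = 0) (hmono : ∀ A B : Set X, A ⊆ B → μ A ≤ μ B)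
    (hsub : ∀ A B : Set X, μ (A ∪ B) ≤ μ A + μ B)
    (hpt : ∀ x : X, 0 < μ {x} ∧ μ {x} < ∞) (hω : ∀ x : X, 0 < ω x ∧ ω x < ∞)
    (f : X → ℝ≥0∞) (hf : ∀ x, f x ≠ ∞) :
    nuF ω f p.toReal univ ≤
      ENNReal.ofReal ((2:ℝ) ^ p.toReal) *
        (1 - ENNReal.ofReal ((2:ℝ) ^ (-p.toReal)))⁻¹ *
        (∫⁻ l in Ioi (0:ℝ), ENNReal.ofReal (p.toReal * l ^ (p.toReal - 1)) *
          slF μ ω p f (ENNReal.ofReal l)) := by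
  have hT : 0 < p.toReal := ENNReal.toReal_pos hp0 hptop
  set T := p.toReal with hTdef
  set q : ℝ≥0∞ := ENNReal.ofReal ((2:ℝ) ^ (-T)) with hqdef
  have hq0 : q ≠ 0 := by
    rw [hqdef]; simp [ENNReal.ofReal_eq_zero, not_le, Real.rpow_pos_of_pos two_pos]
  have hqtop : q ≠ ∞ := ENNReal.ofReal_ne_top
  have hq1 : q < 1 := by
    rw [hqdef, ← ENNReal.ofReal_one]
    exact (ENNReal.ofReal_lt_ofReal_iff one_pos).mpr
      (Real.rpow_lt_one_of_one_lt_of_neg one_lt_two (neg_lt_zero.mpr hT))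
  have h1q0 : (1 : ℝ≥0∞) - q ≠ 0 := by
    rw [Ne, tsub_eq_zero_iff_le]; exact not_le.mpr hq1
  have h1qtop : (1 : ℝ≥0∞) - q ≠ ∞ := ((tsub_le_self).trans_lt ENNReal.one_lt_top).ne
  obtain ⟨K, hK0⟩ := exists_K μ ω f hT hmono hpt hω hf
  set r : ℕ → ℝ := fun n => (2:ℝ) ^ ((K:ℝ) - n) with hrdef
  have hrpos : ∀ n, 0 < r n := fun n => Real.rpow_pos_of_pos two_pos _
  have hrle : ∀ m n : ℕ, m ≤ n → r n ≤ r m := by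
    intro m n h
    rw [hrdef]
    apply (Real.rpow_le_rpow_left_iff one_lt_two).mpr
    have : (m:ℝ) ≤ (n:ℝ) := by exact_mod_cast h
    linarith
  set κ : ℝ≥0∞ := ENNReal.ofReal ((2:ℝ) ^ ((K:ℝ) * T)) with hκdef
  have hκtop : κ ≠ ∞ := ENNReal.ofReal_ne_top
  set v : ℕ → ℝ≥0∞ := fun n => κ * q ^ n with hvdef
  have hlev : ∀ n, (ENNReal.ofReal (r n)) ^ T = v n := fun n => level_eq K n
  have hμfin : ∀ A : Set X, μ A < ∞ := mu_fin h0 hsub hpt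
  set dens : ℝ → ℝ≥0∞ := fun l => ENNReal.ofReal (T * l ^ (T - 1)) with hdens
  set I := ∫⁻ l in Ioi (0:ℝ), dens l * slF μ ω p f (ENNReal.ofReal l) with hI
  -- real level arithmetic
  have hr2 : ∀ n, r n ^ T = (2:ℝ) ^ T * r (n+1) ^ T := by
    intro n
    have h1 : r n = 2 * r (n+1) := by
      rw [hrdef]
      simp only []
      rw [show (K:ℝ) - (n:ℕ) = 1 + ((K:ℝ) - ((n+1:ℕ):ℝ)) by push_cast; ring,
        Real.rpow_add two_pos, Real.rpow_one]
    rw [h1, Real.mul_rpow (by norm_num) (hrpos _).le]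
  -- optimal sets
  have hopt := fun lam => exists_opt (μ := μ) (ω := ω) (f := f) hp0 hptop lam
  choose A hA1 hA2 using hopt
  set D : ℕ → Set X := fun n => A (ENNReal.ofReal (r n)) with hD
  -- ν (D 0) = 0
  have hsl0 : slF μ ω p f (ENNReal.ofReal (r 0)) = 0 := by
    refine le_antisymm ?_ (zero_le)
    have hadm0 : supF μ ω p ((∅ : Set X)ᶜ.indicator f) ≤ ENNReal.ofReal (r 0) := by
      refine adm_of hp0 hptop hmono fun C _ => ?_
      rw [← hTdef, hlev 0]
      simpa only [hvdef, pow_zero, mul_one] using hK0 C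
    calc slF μ ω p f (ENNReal.ofReal (r 0)) ≤ μ ∅ := slF_le hadm0
      _ = 0 := h0
  have hD0 : nuF ω f T (D 0) = 0 := by
    have : μ (D 0) = 0 := by rw [hD]; rw [hA2]; exact hsl0
    rw [mu_eq_zero hmono hpt this]
    exact nuF_empty
  -- the chain inequality
  have hchain : ∀ n, nuF ω f T (D (n+1)) ≤
      nuF ω f T (D n) + v n * slF μ ω p f (ENNReal.ofReal (r (n+1))) := by
    intro n
    have hsplit := nuF_split (ω := ω) (f := f) (T := T) (D (n+1)) (D n)
    have h1 : nuF ω f T (D (n+1) ∩ D n) ≤ nuF ω f T (D n) :=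
      nuF_mono Set.inter_subset_right
    have h2 : nuF ω f T (D (n+1) \ D n) ≤ v n * slF μ ω p f (ENNReal.ofReal (r (n+1))) := by
      have h3 := adm_to hp0 hptop hmono hpt hμfin (hA1 (ENNReal.ofReal (r n))) (D (n+1))
      rw [← hTdef, hlev n] at h3
      calc nuF ω f T (D (n+1) \ D n) = nuF ω f T (D (n+1) ∩ (D n)ᶜ) := by rw [Set.diff_eq]
        _ ≤ v n * μ (D (n+1)) := h3
        _ = v n * slF μ ω p f (ENNReal.ofReal (r (n+1))) := by rw [hD, hA2]
    calc nuF ω f T (D (n+1)) =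
        nuF ω f T (D (n+1) ∩ D n) + nuF ω f T (D (n+1) \ D n) := hsplit
      _ ≤ nuF ω f T (D n) + v n * slF μ ω p f (ENNReal.ofReal (r (n+1))) := add_le_add h1 h2
  have hchainsum : ∀ N, nuF ω f T (D N) ≤
      ∑ n ∈ Finset.range N, v n * slF μ ω p f (ENNReal.ofReal (r (n+1))) := by
    intro N
    induction N with
    | zero => simp [hD0]
    | succ m ih =>
      rw [Finset.sum_range_succ]
      exact le_trans (hchain m) (add_le_add_left ih _)
  -- from univ to D N
  have huniv : ∀ N, nuF ω f T univ ≤ nuF ω f T (D N) + v N * μ univ := by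
    intro N
    have h3 := adm_to hp0 hptop hmono hpt hμfin (hA1 (ENNReal.ofReal (r N))) univ
    rw [← hTdef, hlev N] at h3
    calc nuF ω f T univ = nuF ω f T (univ ∩ D N) + nuF ω f T (univ \ D N) :=
        nuF_split _ _
      _ ≤ nuF ω f T (D N) + v N * μ univ := by
          refine add_le_add (nuF_mono Set.inter_subset_right) ?_
          calc nuF ω f T (univ \ D N) = nuF ω f T (univ ∩ (D N)ᶜ) := by rw [Set.diff_eq]
            _ ≤ v N * μ univ := h3
  -- term versus integral
  set J : ℕ → ℝ≥0∞ := fun n =>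
    ∫⁻ l in Ioc (r (n+2)) (r (n+1)), dens l * slF μ ω p f (ENNReal.ofReal l) with hJ
  have hterm : ∀ n, v n * slF μ ω p f (ENNReal.ofReal (r (n+1))) ≤
      ENNReal.ofReal ((2:ℝ) ^ T) * (1 - q)⁻¹ * J n := by
    intro n
    have hJge : ENNReal.ofReal (r (n+1) ^ T - r (n+2) ^ T) *
        slF μ ω p f (ENNReal.ofReal (r (n+1))) ≤ J n := by
      have hb : ∀ l ∈ Ioc (r (n+2)) (r (n+1)),
          dens l * slF μ ω p f (ENNReal.ofReal (r (n+1))) ≤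
            dens l * slF μ ω p f (ENNReal.ofReal l) := fun l hl =>
        mul_le_mul_right (slF_anti (ENNReal.ofReal_le_ofReal hl.2)) _
      calc ENNReal.ofReal (r (n+1) ^ T - r (n+2) ^ T) *
            slF μ ω p f (ENNReal.ofReal (r (n+1)))
          = (∫⁻ l in Ioc (r (n+2)) (r (n+1)), dens l) *
              slF μ ω p f (ENNReal.ofReal (r (n+1))) := by
            rw [hdens, lint_Ioc hT (hrpos (n+2)) (hrle (n+1) (n+2) (by omega))]
        _ = ∫⁻ l in Ioc (r (n+2)) (r (n+1)),
              dens l * slF μ ω p f (ENNReal.ofReal (r (n+1))) := by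
            rw [lintegral_mul_const' _ _ ?_]
            · rw [hD] at *
              have : slF μ ω p f (ENNReal.ofReal (r (n+1))) = μ (A (ENNReal.ofReal (r (n+1)))) :=
                (hA2 _).symm
              rw [this]
              exact (hμfin _).ne
        _ ≤ J n := setLIntegral_mono' measurableSet_Ioc hb
    have hv2 : v n = ENNReal.ofReal ((2:ℝ) ^ T) * ENNReal.ofReal (r (n+1) ^ T) := by
      rw [← hlev n, ENNReal.ofReal_rpow_of_pos (hrpos n), hr2 n,
        ENNReal.ofReal_mul (Real.rpow_nonneg (by norm_num) _)]
    have hsub2 : ENNReal.ofReal (r (n+1) ^ T - r (n+2) ^ T) =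
        ENNReal.ofReal (r (n+1) ^ T) * (1 - q) := by
      have hre : r (n+2) ^ T = r (n+1) ^ T * (2:ℝ) ^ (-T) := by
        have h4 : (2:ℝ) ^ T * (2:ℝ) ^ (-T) = 1 := by
          rw [← Real.rpow_add two_pos]
          norm_num
        calc r (n+2) ^ T = r (n+2) ^ T * ((2:ℝ) ^ T * (2:ℝ) ^ (-T)) := by rw [h4, mul_one]
          _ = ((2:ℝ) ^ T * r (n+2) ^ T) * (2:ℝ) ^ (-T) := by ring
          _ = r (n+1) ^ T * (2:ℝ) ^ (-T) := by rw [← hr2 (n+1)]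
      rw [hre, ← mul_one_sub, ENNReal.ofReal_mul (Real.rpow_nonneg (hrpos _).le _),
        ENNReal.ofReal_sub _ (Real.rpow_nonneg (by norm_num) _), ENNReal.ofReal_one, hqdef]
    calc v n * slF μ ω p f (ENNReal.ofReal (r (n+1)))
        = ENNReal.ofReal ((2:ℝ) ^ T) * (1 - q)⁻¹ *
            ((1 - q) * (ENNReal.ofReal (r (n+1) ^ T) *
              slF μ ω p f (ENNReal.ofReal (r (n+1))))) := by
          rw [hv2]
          have : (1 - q)⁻¹ * (1 - q) = 1 := ENNReal.inv_mul_cancel h1q0 h1qtop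
          calc ENNReal.ofReal ((2:ℝ) ^ T) * ENNReal.ofReal (r (n+1) ^ T) *
              slF μ ω p f (ENNReal.ofReal (r (n+1)))
              = ENNReal.ofReal ((2:ℝ) ^ T) * (((1 - q)⁻¹ * (1 - q)) *
                (ENNReal.ofReal (r (n+1) ^ T) *
                  slF μ ω p f (ENNReal.ofReal (r (n+1))))) := by rw [this, one_mul]; ring
            _ = ENNReal.ofReal ((2:ℝ) ^ T) * (1 - q)⁻¹ *
                ((1 - q) * (ENNReal.ofReal (r (n+1) ^ T) *
                  slF μ ω p f (ENNReal.ofReal (r (n+1))))) := by ring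
      _ ≤ ENNReal.ofReal ((2:ℝ) ^ T) * (1 - q)⁻¹ * J n := by
          refine mul_le_mul_right ?_ _
          calc (1 - q) * (ENNReal.ofReal (r (n+1) ^ T) *
                slF μ ω p f (ENNReal.ofReal (r (n+1))))
              = ENNReal.ofReal (r (n+1) ^ T - r (n+2) ^ T) *
                  slF μ ω p f (ENNReal.ofReal (r (n+1))) := by rw [hsub2]; ring
            _ ≤ J n := hJge
  -- partial sums of J bounded by I
  have hJsum : ∀ N, ∑ n ∈ Finset.range N, J n =
      ∫⁻ l in Ioc (r (N+1)) (r 1), dens l * slF μ ω p f (ENNReal.ofReal l) := by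
    intro N
    induction N with
    | zero => simp
    | succ m ih =>
      rw [Finset.sum_range_succ, ih]
      have hun : Ioc (r (m+2)) (r 1) = Ioc (r (m+2)) (r (m+1)) ∪ Ioc (r (m+1)) (r 1) :=
        (Set.Ioc_union_Ioc_eq_Ioc (hrle (m+1) (m+2) (by omega))
          (hrle 1 (m+1) (by omega))).symm
      rw [hun, Measure.restrict_union (Set.Ioc_disjoint_Ioc_of_le le_rfl) measurableSet_Ioc,
        lintegral_add_measure]
      ring
  have hJle : ∀ N, ∑ n ∈ Finset.range N, J n ≤ I := by
    intro N
    rw [hJsum N, hI]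
    exact lintegral_mono_set fun x hx => lt_trans (hrpos (N+1)) hx.1
  -- combine for each N
  have hmain : ∀ N, nuF ω f T univ ≤
      ENNReal.ofReal ((2:ℝ) ^ T) * (1 - q)⁻¹ * I + v N * μ univ := by
    intro N
    calc nuF ω f T univ ≤ nuF ω f T (D N) + v N * μ univ := huniv N
      _ ≤ (∑ n ∈ Finset.range N, v n * slF μ ω p f (ENNReal.ofReal (r (n+1)))) +
            v N * μ univ := add_le_add_left (hchainsum N) _
      _ ≤ (∑ n ∈ Finset.range N, ENNReal.ofReal ((2:ℝ) ^ T) * (1 - q)⁻¹ * J n) +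
            v N * μ univ := add_le_add_left (Finset.sum_le_sum fun n _ => hterm n) _
      _ = ENNReal.ofReal ((2:ℝ) ^ T) * (1 - q)⁻¹ * (∑ n ∈ Finset.range N, J n) +
            v N * μ univ := by rw [← Finset.mul_sum]
      _ ≤ ENNReal.ofReal ((2:ℝ) ^ T) * (1 - q)⁻¹ * I + v N * μ univ :=
          add_le_add_left (mul_le_mul_right (hJle N) _) _
  -- pass to the limit
  have htend : Filter.Tendsto (fun N : ℕ => v N * μ univ) Filter.atTop (nhds 0) := by
    have h1 : (fun N : ℕ => v N * μ univ) = fun N : ℕ => (κ * μ univ) * q ^ N := by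
      funext N
      rw [hvdef]
      ring
    rw [h1]
    have h2 : Filter.Tendsto (fun N : ℕ => q ^ N) Filter.atTop (nhds 0) :=
      ENNReal.tendsto_pow_atTop_nhds_zero_of_lt_one hq1
    have h3 := ENNReal.Tendsto.const_mul h2
      (Or.inr (ENNReal.mul_ne_top hκtop (hμfin univ).ne))
    simpa using h3
  refine ENNReal.le_of_forall_pos_le_add fun ε hε _ => ?_
  have hev := htend.eventually_lt_const (show (0:ℝ≥0∞) < ε from ENNReal.coe_pos.mpr hε)
  obtain ⟨N, hN⟩ := hev.exists
  exact le_trans (hmain N) (add_le_add_right hN.le _)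



/-- Collapsing of exponents in the finite setting (Theorem 1.1(i)):
for every `0 < p ≤ ∞` there is a constant `C = C(p)`, uniform in the finite outer measure
setting `(X, μ, ω)`, such that `C⁻¹ ‖f‖_{L^p(X,ω)} ≤ ‖f‖_{L^p(ℓ^p)} ≤ C ‖f‖_{L^p(X,ω)}`. -/
theorem collapsing_finite (p : ℝ≥0∞) (hp : 0 < p) :
    ∃ C : ℝ≥0∞, 0 < C ∧ C ≠ ∞ ∧
      ∀ (X : Type) (_ : Fintype X) (μ : Set X → ℝ≥0∞) (ω : X → ℝ≥0∞),
        μ ∅ = 0 →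
        (∀ A B : Set X, A ⊆ B → μ A ≤ μ B) →
        (∀ A B : Set X, μ (A ∪ B) ≤ μ A + μ B) →
        (∀ x : X, 0 < μ {x} ∧ μ {x} < ∞) →
        (∀ x : X, 0 < ω x ∧ ω x < ∞) →
        ∀ f : X → ℝ≥0∞, (∀ x, f x ≠ ∞) →
          C⁻¹ * wLpF ω p f ≤ LpF μ ω p p f ∧ LpF μ ω p p f ≤ C * wLpF ω p f := by
  rcases eq_or_ne p ∞ with rfl | hptop
  · refine ⟨1, one_pos, ENNReal.one_ne_top, ?_⟩
    intro X inst μ ω h0 hmono hsub hpt hω f hf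
    have hsup : supF μ ω ∞ f = ⨆ x, f x := by
      rw [supF]
      apply le_antisymm
      · refine iSup_le fun A => ?_
        rw [ellF, if_pos rfl]
        exact iSup₂_le fun x _ => le_iSup f x
      · refine le_iSup_of_le univ ?_
        rw [ellF, if_pos rfl]
        exact iSup_le fun x => le_iSup₂ (f := fun x (_ : x ∈ univ) => f x) x (mem_univ x)
    rw [LpF, if_pos rfl, wLpF, if_pos rfl, hsup]
    exact ⟨by simp, by simp⟩
  · have hp0 : p ≠ 0 := hp.ne'
    have hT : 0 < p.toReal := ENNReal.toReal_pos hp0 hptop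
    set T := p.toReal with hTdef
    set q : ℝ≥0∞ := ENNReal.ofReal ((2:ℝ) ^ (-T)) with hqdef
    have hq0 : q ≠ 0 := by
      rw [hqdef]; simp [ENNReal.ofReal_eq_zero, not_le, Real.rpow_pos_of_pos two_pos]
    have hq1 : q < 1 := by
      rw [hqdef, ← ENNReal.ofReal_one]
      exact (ENNReal.ofReal_lt_ofReal_iff one_pos).mpr
        (Real.rpow_lt_one_of_one_lt_of_neg one_lt_two (neg_lt_zero.mpr hT))
    have h1q0 : (1:ℝ≥0∞) - q ≠ 0 := by rw [Ne, tsub_eq_zero_iff_le]; exact not_le.mpr hq1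
    set Cu : ℝ≥0∞ := (q⁻¹ * (1 - q)⁻¹) ^ T⁻¹ with hCu
    set Cl : ℝ≥0∞ := (ENNReal.ofReal ((2:ℝ) ^ T) * (1 - q)⁻¹) ^ T⁻¹ with hCl
    have hCufin : Cu ≠ ∞ := by
      rw [hCu]
      exact (ENNReal.rpow_lt_top_of_nonneg (inv_nonneg.mpr hT.le)
        (ENNReal.mul_ne_top (ENNReal.inv_ne_top.mpr hq0)
          (ENNReal.inv_ne_top.mpr h1q0))).ne
    have hClfin : Cl ≠ ∞ := by
      rw [hCl]
      exact (ENNReal.rpow_lt_top_of_nonneg (inv_nonneg.mpr hT.le)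
        (ENNReal.mul_ne_top ENNReal.ofReal_ne_top (ENNReal.inv_ne_top.mpr h1q0))).ne
    have hC1 : (1:ℝ≥0∞) ≤ 1 + Cu + Cl := le_trans le_self_add le_self_add
    have hC0 : (0:ℝ≥0∞) < 1 + Cu + Cl := lt_of_lt_of_le one_pos hC1
    have hCtop : (1:ℝ≥0∞) + Cu + Cl ≠ ∞ :=
      ENNReal.add_ne_top.mpr ⟨ENNReal.add_ne_top.mpr ⟨ENNReal.one_ne_top, hCufin⟩, hClfin⟩
    have hCu_le : Cu ≤ 1 + Cu + Cl := le_trans le_add_self le_self_add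
    have hCl_le : Cl ≤ 1 + Cu + Cl := le_add_self
    refine ⟨1 + Cu + Cl, hC0, hCtop, ?_⟩
    intro X inst μ ω h0 hmono hsub hpt hω f hf
    have hw : wLpF ω p f = (nuF ω f T univ) ^ T⁻¹ := by
      rw [wLpF, if_neg hptop, tsum_fintype]
      congr 1
      rw [nuF]
      exact Finset.sum_congr rfl fun x _ => by rw [Set.indicator_univ]
    set I := ∫⁻ l in Ioi (0:ℝ), ENNReal.ofReal (T * l ^ (T - 1)) *
        slF μ ω p f (ENNReal.ofReal l) with hIdef
    have hL : LpF μ ω p p f = I ^ T⁻¹ := by rw [LpF, if_neg hptop]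
    have hup : I ≤ q⁻¹ * (1 - q)⁻¹ * nuF ω f T univ :=
      upper μ ω p hp0 hptop h0 hmono hsub hpt hω f hf
    have hlow : nuF ω f T univ ≤ ENNReal.ofReal ((2:ℝ) ^ T) * (1 - q)⁻¹ * I :=
      lower μ ω p hp0 hptop h0 hmono hsub hpt hω f hf
    constructor
    · have h1 : wLpF ω p f ≤ Cl * LpF μ ω p p f := by
        rw [hw, hL]
        calc (nuF ω f T univ) ^ T⁻¹
            ≤ (ENNReal.ofReal ((2:ℝ) ^ T) * (1 - q)⁻¹ * I) ^ T⁻¹ :=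
              ENNReal.rpow_le_rpow hlow (inv_nonneg.mpr hT.le)
          _ = Cl * I ^ T⁻¹ := by
              rw [ENNReal.mul_rpow_of_nonneg _ _ (inv_nonneg.mpr hT.le), ← hCl]
      calc (1 + Cu + Cl)⁻¹ * wLpF ω p f
          ≤ (1 + Cu + Cl)⁻¹ * (Cl * LpF μ ω p p f) := mul_le_mul_right h1 _
        _ = ((1 + Cu + Cl)⁻¹ * Cl) * LpF μ ω p p f := by rw [mul_assoc]
        _ ≤ ((1 + Cu + Cl)⁻¹ * (1 + Cu + Cl)) * LpF μ ω p p f :=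
            mul_le_mul_left (mul_le_mul_right hCl_le _) _
        _ = LpF μ ω p p f := by rw [ENNReal.inv_mul_cancel hC0.ne' hCtop, one_mul]
    · rw [hL, hw]
      calc I ^ T⁻¹
          ≤ (q⁻¹ * (1 - q)⁻¹ * nuF ω f T univ) ^ T⁻¹ :=
            ENNReal.rpow_le_rpow hup (inv_nonneg.mpr hT.le)
        _ = Cu * (nuF ω f T univ) ^ T⁻¹ := by
            rw [ENNReal.mul_rpow_of_nonneg _ _ (inv_nonneg.mpr hT.le), ← hCu]
        _ ≤ (1 + Cu + Cl) * (nuF ω f T univ) ^ T⁻¹ := mul_le_mul_left hCu_le _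


end
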